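/- Let f ∈ ℝ[x₁,…,x_n]ⁿ be a polynomial vector field, T > 0, g = (g₁,…,g_m) and h = (h₁,…,h_ℓ) tuples of polynomials in ℝ[x₁,…,x_n] such that X = {y ∈ ℝⁿ : g_i(y) ≥ 0 for all i} is closed and M = {y ∈ ℝⁿ : h_j(y) ≥ 0 for all j} satisfies M ⊆ X. Suppose the polynomials v ∈ ℝ[t, x₁,…,x_n] and w ∈ ℝ[x₁,…,x_n] satisfy: w ∈ Q(g); w − v(0,·) − 1 ∈ Q(g); −(∂_t v + ⟨∇_x v, f⟩) ∈ Q(g, (T−t)·t); and v(T,·) ∈ Q(h). Then the region of attraction R_T^M satisfies R_T^M ⊆ {y ∈ ℝⁿ : v(0,y) ≥ 0} and R_T^M ⊆ {y ∈ ℝⁿ : w(y) ≥ 1}. -/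

import Mathlib

open MvPolynomial Set

/-- The quadratic module `Q(g)` generated by `g₁, …, g_m`: polynomials of the form
`s₀ + s₁·g₁ + ⋯ + s_m·g_m` where each `sᵢ` is a sum of squares of polynomials. -/
def QuadraticModule {m : ℕ} {σ : Type*} (g : Fin m → MvPolynomial σ ℝ) :
    Set (MvPolynomial σ ℝ) :=
  {p | ∃ s₀ : MvPolynomial σ ℝ, ∃ s : Fin m → MvPolynomial σ ℝ,
    IsSumSq s₀ ∧ (∀ i, IsSumSq (s i)) ∧ p = s₀ + ∑ i, s i * g i}

lemma eval_isSumSq_nonneg {σ : Type*} (y : σ → ℝ) {p : MvPolynomial σ ℝ}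
    (hp : IsSumSq p) : 0 ≤ eval y p := by
  induction hp with
  | zero => simp
  | sq_add a hS ih =>
    simp only [map_add, map_mul]
    exact add_nonneg (mul_self_nonneg _) ih

lemma qm_nonneg {m : ℕ} {σ : Type*} {g : Fin m → MvPolynomial σ ℝ} {p : MvPolynomial σ ℝ}
    (hp : p ∈ QuadraticModule g) (y : σ → ℝ) (hy : ∀ i, 0 ≤ eval y (g i)) :
    0 ≤ eval y p := by
  obtain ⟨s₀, s, hs₀, hs, rfl⟩ := hp
  simp only [map_add, map_sum, map_mul]
  exact add_nonneg (eval_isSumSq_nonneg y hs₀) (Finset.sum_nonneg fun i _ =>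
    mul_nonneg (eval_isSumSq_nonneg y (hs i)) (hy i))

lemma eval_aeval_cons {n : ℕ} (c : ℝ) (y : Fin n → ℝ) (v : MvPolynomial (Fin (n+1)) ℝ) :
    eval y (aeval (Fin.cons (C c) MvPolynomial.X) v) = eval (Fin.cons c y) v := by
  have : (eval y).comp ((aeval (Fin.cons (C c) MvPolynomial.X :
        Fin (n+1) → MvPolynomial (Fin n) ℝ)).toRingHom) = eval (Fin.cons c y) := by
    apply MvPolynomial.ringHom_ext
    · intro r; simp
    · intro i
      refine Fin.cases ?_ (fun j => ?_) i <;> simp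
  exact RingHom.congr_fun this v

lemma hasDerivAt_eval_curve {n : ℕ} (f : Fin n → MvPolynomial (Fin n) ℝ)
    (x : ℝ → Fin n → ℝ) (t : ℝ)
    (hx : HasDerivAt x (fun k => eval (x t) (f k)) t)
    (v : MvPolynomial (Fin (n+1)) ℝ) :
    HasDerivAt (fun s => eval (Fin.cons s (x s)) v)
      (eval (Fin.cons t (x t))
        (pderiv (0 : Fin (n+1)) v + ∑ k : Fin n, pderiv k.succ v * rename Fin.succ (f k))) t := by
  induction v using MvPolynomial.induction_on with
  | C a => simpa using hasDerivAt_const t a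
  | add p q hp hq =>
    have := hp.add hq
    simp only [map_add, add_mul, Finset.sum_add_distrib] at this ⊢
    exact this.congr_deriv (by ring)
  | mul_X p i hp =>
    have hXi : HasDerivAt (fun s => (Fin.cons s (x s) : Fin (n+1) → ℝ) i)
        (eval (Fin.cons t (x t))
          (pderiv (0 : Fin (n+1)) (MvPolynomial.X i)
            + ∑ k : Fin n, pderiv k.succ (MvPolynomial.X i) * rename Fin.succ (f k))) t := by
      induction i using Fin.cases with
      | zero =>
        have h1 : (pderiv (0 : Fin (n+1)) (MvPolynomial.X (0 : Fin (n+1)))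
            + ∑ k : Fin n, pderiv k.succ (MvPolynomial.X (0 : Fin (n+1))) * rename Fin.succ (f k))
            = 1 := by
          simp only [pderiv_X, Pi.single_eq_same]
          rw [Finset.sum_eq_zero, add_zero]
          intro k _
          rw [Pi.single_eq_of_ne (Fin.succ_ne_zero k).symm, zero_mul]
        rw [h1, map_one]
        simp only [Fin.cons_zero]
        exact hasDerivAt_id' t
      | succ j =>
        have h1 : (pderiv (0 : Fin (n+1)) (MvPolynomial.X j.succ)
            + ∑ k : Fin n, pderiv k.succ (MvPolynomial.X j.succ) * rename Fin.succ (f k))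
            = rename Fin.succ (f j) := by
          simp only [pderiv_X]
          rw [Pi.single_eq_of_ne (Fin.succ_ne_zero j), zero_add]
          rw [Finset.sum_eq_single j]
          · simp
          · intro k _ hk
            rw [Pi.single_eq_of_ne (fun hh => hk (Fin.succ_inj.mp hh).symm), zero_mul]
          · simp
        rw [h1, eval_rename]
        have h2 : (Fin.cons t (x t) : Fin (n+1) → ℝ) ∘ Fin.succ = x t := by
          funext k; simp
        rw [h2]
        simp only [Fin.cons_succ]
        exact hasDerivAt_pi.mp hx j
    have hmul := hp.mul hXi
    have hD : (pderiv (0 : Fin (n+1)) (p * MvPolynomial.X i)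
          + ∑ k : Fin n, pderiv k.succ (p * MvPolynomial.X i) * rename Fin.succ (f k))
        = (pderiv (0 : Fin (n+1)) p + ∑ k : Fin n, pderiv k.succ p * rename Fin.succ (f k))
            * MvPolynomial.X i
          + p * (pderiv (0 : Fin (n+1)) (MvPolynomial.X i)
            + ∑ k : Fin n, pderiv k.succ (MvPolynomial.X i) * rename Fin.succ (f k)) := by
      simp only [pderiv_mul, add_mul, mul_add, Finset.sum_add_distrib, Finset.sum_mul,
        Finset.mul_sum]
      ring_nf
    have hfun : (fun s => eval (Fin.cons s (x s)) (p * MvPolynomial.X i))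
        = (fun s => eval (Fin.cons s (x s)) p) * fun s => (Fin.cons s (x s) : Fin (n+1) → ℝ) i := by
      funext s
      simp [eval_X]
    rw [hfun]
    refine hmul.congr_deriv ?_
    rw [hD]
    simp only [map_add, map_mul, eval_X]

/-- The region of attraction `R_T^M`: initial conditions `x₀` from which some solution of
`x' = f(x)` stays in `X` on `[0,T]` and hits the target `M` at time `T`. -/
def RoA {n : ℕ} (f : (Fin n → ℝ) → (Fin n → ℝ)) (X M : Set (Fin n → ℝ)) (T : ℝ) :
    Set (Fin n → ℝ) :=
  {x₀ | ∃ x : ℝ → (Fin n → ℝ), x 0 = x₀ ∧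
    (∀ t ∈ Icc (0 : ℝ) T, HasDerivAt x (f (x t)) t) ∧
    (∀ t ∈ Icc (0 : ℝ) T, x t ∈ X) ∧ x T ∈ M}

/-- SoS certificates yield outer approximations of the region of attraction.
Polynomials in `(t, x₁, …, x_n)` are modelled as `MvPolynomial (Fin (n+1)) ℝ` with variable
`0` playing the role of `t` and `k.succ` that of `x_k`; `v(c, ·) = aeval (Fin.cons (C c) X) v`.
The vector field is `y ↦ (eval y (f k))_k`. -/
theorem sostab_stmt7 {n m ℓ : ℕ}
    (f : Fin n → MvPolynomial (Fin n) ℝ) (T : ℝ) (hT : 0 < T)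
    (g : Fin m → MvPolynomial (Fin n) ℝ) (h : Fin ℓ → MvPolynomial (Fin n) ℝ)
    (hXcl : IsClosed {y : Fin n → ℝ | ∀ i, 0 ≤ eval y (g i)})
    (hMX : {y : Fin n → ℝ | ∀ j, 0 ≤ eval y (h j)} ⊆ {y : Fin n → ℝ | ∀ i, 0 ≤ eval y (g i)})
    (v : MvPolynomial (Fin (n + 1)) ℝ) (w : MvPolynomial (Fin n) ℝ)
    (hw : w ∈ QuadraticModule g)
    (hwv : w - aeval (Fin.cons (C (0 : ℝ)) MvPolynomial.X) v - 1 ∈ QuadraticModule g)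
    (hlie : -(pderiv (0 : Fin (n + 1)) v
        + ∑ k : Fin n, pderiv k.succ v * rename Fin.succ (f k)) ∈
      QuadraticModule (Fin.cons ((C T - MvPolynomial.X (0 : Fin (n + 1))) * MvPolynomial.X 0)
        (fun i => rename Fin.succ (g i))))
    (hvT : aeval (Fin.cons (C T) MvPolynomial.X) v ∈ QuadraticModule h) :
    RoA (fun y k => eval y (f k)) {y | ∀ i, 0 ≤ eval y (g i)} {y | ∀ j, 0 ≤ eval y (h j)} T
        ⊆ {y : Fin n → ℝ | 0 ≤ eval (Fin.cons 0 y) v} ∧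
      RoA (fun y k => eval y (f k)) {y | ∀ i, 0 ≤ eval y (g i)} {y | ∀ j, 0 ≤ eval y (h j)} T
        ⊆ {y : Fin n → ℝ | 1 ≤ eval y w} := by
  have main : ∀ x₀ ∈ RoA (fun y k => eval y (f k)) {y | ∀ i, 0 ≤ eval y (g i)}
      {y | ∀ j, 0 ≤ eval y (h j)} T,
      0 ≤ eval (Fin.cons 0 x₀) v ∧ (∀ i, 0 ≤ eval x₀ (g i)) := by
    rintro x₀ ⟨x, hx0, hd, hXmem, hM⟩
    set D := pderiv (0 : Fin (n+1)) v + ∑ k : Fin n, pderiv k.succ v * rename Fin.succ (f k)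
      with hDdef
    have key : ∀ t ∈ Icc (0:ℝ) T, HasDerivAt (fun s => eval (Fin.cons s (x s)) v)
        (eval (Fin.cons t (x t)) D) t :=
      fun t ht => hasDerivAt_eval_curve f x t (hd t ht) v
    have hDle : ∀ t ∈ Icc (0:ℝ) T, eval (Fin.cons t (x t)) D ≤ 0 := by
      intro t ht
      have h0 : 0 ≤ eval (Fin.cons t (x t)) (-D) := by
        refine qm_nonneg hlie _ ?_
        intro i
        refine Fin.cases ?_ (fun j => ?_) i
        · simp only [Fin.cons_zero, map_mul, map_sub, eval_C, eval_X]
          exact mul_nonneg (sub_nonneg.mpr ht.2) ht.1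
        · simp only [Fin.cons_succ, eval_rename]
          have h2 : (Fin.cons t (x t) : Fin (n+1) → ℝ) ∘ Fin.succ = x t := by
            funext k; simp
          rw [h2]
          exact hXmem t ht j
      rw [map_neg] at h0
      linarith
    have anti : AntitoneOn (fun s => eval (Fin.cons s (x s)) v) (Icc 0 T) := by
      apply antitoneOn_of_deriv_nonpos (convex_Icc 0 T)
      · intro t ht
        exact (key t ht).continuousAt.continuousWithinAt
      · intro t ht
        rw [interior_Icc] at ht
        exact ((key t ⟨ht.1.le, ht.2.le⟩).differentiableAt).differentiableWithinAt
      · intro t ht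
        rw [interior_Icc] at ht
        have ht' : t ∈ Icc (0:ℝ) T := ⟨ht.1.le, ht.2.le⟩
        rw [(key t ht').deriv]
        exact hDle t ht'
    have hVT : 0 ≤ eval (Fin.cons T (x T)) v := by
      rw [← eval_aeval_cons]
      exact qm_nonneg hvT _ hM
    have hV0 : 0 ≤ eval (Fin.cons 0 (x 0)) v :=
      le_trans hVT (anti (left_mem_Icc.mpr hT.le) (right_mem_Icc.mpr hT.le) hT.le)
    exact ⟨by rwa [hx0] at hV0, by rw [← hx0]; exact hXmem 0 (left_mem_Icc.mpr hT.le)⟩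
  constructor
  · intro x₀ hx₀
    exact (main x₀ hx₀).1
  · intro x₀ hx₀
    obtain ⟨hv0, hxX⟩ := main x₀ hx₀
    have h1 := qm_nonneg hwv x₀ hxX
    simp only [map_sub, map_one, eval_aeval_cons] at h1
    simp only [Set.mem_setOf_eq]
    linarith
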